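/- Let G be a non-Hamiltonian graph on n ≥ 3 vertices possessing a Hamiltonian path v_1, v_2, …, v_n, and set x = v_1 and y = v_n. Then for every edge v_i v_j of G with 1 ≤ i < j ≤ n: if v_{i+1} y is an edge of G then v_{j+1} x is not an edge of G, and if v_{i−1} y is an edge of G then v_{j−1} x is not an edge of G. -/

import Mathlib

open SimpleGraph

private def mkWalk {V : Type*} (G : SimpleGraph V) (f : ℕ → V) :
    (l : List ℕ) → (a b : ℕ) →
    List.Chain' (fun x y => G.Adj (f x) (f y)) (a :: (l ++ [b])) → G.Walk (f a) (f b)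
  | [], _, _, h => Walk.cons (by simpa [List.Chain'] using h) Walk.nil
  | x :: l, a, b, h =>
      Walk.cons (List.isChain_cons_cons.mp h).1 (mkWalk G f l x b (id (List.isChain_cons_cons.mp h).2 :
        List.Chain' (fun x y => G.Adj (f x) (f y)) (x :: (l ++ [b]))))

private lemma mkWalk_support {V : Type*} (G : SimpleGraph V) (f : ℕ → V) :
    ∀ (l : List ℕ) (a b : ℕ) h,
      (mkWalk G f l a b h).support = f a :: (l.map f ++ [f b])
  | [], a, b, h => by simp [mkWalk]
  | x :: l, a, b, h => by
      simp [mkWalk, mkWalk_support G f l x b]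

private lemma mkWalk_edge {V : Type*} (G : SimpleGraph V) (f : ℕ → V) :
    ∀ (l : List ℕ) (a b c : ℕ) h,
      (∀ m ∈ a :: l, f m ≠ f b) →
      s(f b, f c) ∈ (mkWalk G f l a b h).edges →
      f c = f ((a :: l).getLast (by simp))
  | [], a, b, c, h, hb, hmem => by
      simp only [mkWalk, Walk.edges_cons, Walk.edges_nil, List.mem_singleton] at hmem
      rcases Sym2.eq_iff.mp hmem with ⟨h1, h2⟩ | ⟨h1, h2⟩
      · exact absurd h1.symm (hb a (by simp))
      · simpa using h2
  | x :: l, a, b, c, h, hb, hmem => by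
      simp only [mkWalk, Walk.edges_cons, List.mem_cons] at hmem
      rcases hmem with hmem | hmem
      · rcases Sym2.eq_iff.mp hmem with ⟨h1, h2⟩ | ⟨h1, h2⟩
        · exact absurd h1.symm (hb a (by simp))
        · exact absurd h1.symm (hb x (by simp))
      · have := mkWalk_edge G f l x b c _ (fun m hm => hb m (List.mem_cons_of_mem a hm)) hmem
        rw [this]
        exact congrArg f (List.getLast_cons (by simp)).symm
private lemma helper {V : Type*} [DecidableEq V] [Fintype V] (G : SimpleGraph V) (f : ℕ → V)
    (a : ℕ) (L : List ℕ)
    (hL : 2 ≤ L.length)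
    (hchain : List.Chain' (fun x y => G.Adj (f x) (f y)) (a :: (L ++ [a])))
    (hnodup : (a :: L).Nodup)
    (hfinj : ∀ x ∈ a :: L, ∀ y ∈ a :: L, f x = f y → x = y)
    (hsur : ∀ w, ∃ m ∈ a :: L, f m = w) :
    G.IsHamiltonian := by
  intro _
  obtain ⟨x, L', rfl⟩ : ∃ x L', L = x :: L' := by
    cases L with
    | nil => simp at hL
    | cons x L' => exact ⟨x, L', rfl⟩
  have hL' : L' ≠ [] := by
    intro h; rw [h] at hL; simp at hL
  have h2 := hnodup
  simp only [List.nodup_cons] at h2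
  have hax : a ∉ x :: L' := h2.1
  have hxL' : x ∉ L' := h2.2.1
  set c : G.Walk (f a) (f a) := mkWalk G f (x :: L') a a hchain with hc
  have hcdef : c = Walk.cons (List.isChain_cons_cons.mp hchain).1
      (mkWalk G f L' x a (id (List.isChain_cons_cons.mp hchain).2 :
        List.Chain' (fun x y => G.Adj (f x) (f y)) (x :: (L' ++ [a])))) := rfl
  have hmemsub : ∀ m ∈ x :: L' ++ [a], m ∈ a :: x :: L' := by
    intro m hm; simp at hm ⊢; tauto
  have hcyc : c.IsCycle := by
    rw [hcdef, Walk.cons_isCycle_iff]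
    constructor
    · rw [Walk.isPath_def, mkWalk_support]
      have : f x :: (L'.map f ++ [f a]) = (x :: L' ++ [a]).map f := by simp
      rw [this]
      apply List.Nodup.map_on
      · intro p hp q hq hpq
        exact hfinj p (hmemsub p hp) q (hmemsub q hq) hpq
      · have : (x :: L' ++ [a]).Perm (a :: x :: L') := by
          simpa using List.perm_append_singleton a (x :: L')
        exact this.nodup_iff.mpr hnodup
    · intro hmem
      have hb : ∀ m ∈ x :: L', f m ≠ f a := by
        intro m hm heq
        have := hfinj m (by simp at hm ⊢; tauto) a (by simp) heq
        rw [this] at hm; exact hax hm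
      have hx := mkWalk_edge G f L' x a x _ hb hmem
      have hlast : (x :: L').getLast (by simp) ∈ x :: L' := List.getLast_mem _
      have := hfinj x (by simp) _ (List.mem_cons_of_mem a hlast) hx
      rw [List.getLast_cons hL'] at this
      have : x ∈ L' := this ▸ List.getLast_mem hL'
      exact hxL' this
  refine ⟨f a, c, hcyc, ?_⟩
  intro w
  rw [Walk.support_tail_of_not_nil c hcyc.not_nil, hc, mkWalk_support]
  have : (f a :: ((x :: L').map f ++ [f a])).tail = ((x :: L' ++ [a]).map f) := by simp
  rw [this]
  have hperm : ((x :: L' ++ [a]).map f).Perm ((a :: x :: L').map f) :=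
    (List.perm_append_singleton a (x :: L')).map f
  rw [hperm.count_eq]
  obtain ⟨m, hm, rfl⟩ := hsur w
  apply List.count_eq_one_of_mem
  · exact List.Nodup.map_on hfinj hnodup
  · exact List.mem_map_of_mem hm

private lemma chainAsc {R : ℕ → ℕ → Prop} :
    ∀ (len s : ℕ), (∀ k, s ≤ k → k + 1 < s + len → R k (k + 1)) →
      List.Chain' R (List.range' s len)
  | 0, s, _ => by simp [List.Chain']
  | 1, s, _ => by simp [List.Chain']
  | (m+2), s, h => by
      rw [List.range'_succ, List.range'_succ, List.Chain', List.isChain_cons_cons]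
      refine ⟨h s le_rfl (by omega), ?_⟩
      rw [← List.range'_succ]
      exact chainAsc (m+1) (s+1) (fun k hk hk2 => h k (by omega) (by omega))

private lemma chainDesc {R : ℕ → ℕ → Prop} (len s : ℕ)
    (h : ∀ k, s ≤ k → k + 1 < s + len → R (k + 1) k) :
    List.Chain' R (List.range' s len).reverse := by
  rw [List.Chain', List.isChain_reverse]
  exact chainAsc len s (fun k hk hk2 => h k hk hk2)

private lemma head?_range' (s : ℕ) {len : ℕ} (h : 0 < len) :
    (List.range' s len).head? = some s := by
  obtain ⟨m, rfl⟩ : ∃ m, len = m + 1 := ⟨len - 1, by omega⟩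
  rw [List.range'_succ]; rfl

private lemma getLast?_range' (s : ℕ) {len : ℕ} (h : 0 < len) :
    (List.range' s len).getLast? = some (s + len - 1) := by
  obtain ⟨m, rfl⟩ : ∃ m, len = m + 1 := ⟨len - 1, by omega⟩
  rw [List.range'_concat, List.getLast?_concat]
  congr 1
  omega

private lemma range'_join (s a b : ℕ) :
    List.range' s a ++ List.range' (s + a) b = List.range' s (a + b) := by
  rw [Nat.add_comm a b]
  have h := List.range'_append (s := s) (m := a) (n := b) (step := 1)
  simp only [Nat.one_mul] at h
  rwa [Nat.add_comm a b] at h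

/-- Let `G` be a non-Hamiltonian graph on `n ≥ 3` vertices possessing a Hamiltonian
path `v_1, v_2, …, v_n`, and set `x = v_1` and `y = v_n`. Then for every edge
`v_i v_j` of `G` with `1 ≤ i < j ≤ n`: if `v_{i+1} y` is an edge of `G` then
`v_{j+1} x` is not an edge of `G`, and if `v_{i-1} y` is an edge of `G` then
`v_{j-1} x` is not an edge of `G` (the indices `j+1` and `i-1` being required to be
in range). -/
theorem stmt_9 {V : Type*} [Fintype V] [DecidableEq V] {n : ℕ} (hn : 3 ≤ n)
    (G : SimpleGraph V) (hham : ¬ G.IsHamiltonian)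
    (v : ℕ → V)
    (hinj : ∀ i j, 1 ≤ i → i ≤ n → 1 ≤ j → j ≤ n → v i = v j → i = j)
    (hsurj : ∀ w : V, ∃ i, 1 ≤ i ∧ i ≤ n ∧ v i = w)
    (hpath : ∀ i, 1 ≤ i → i < n → G.Adj (v i) (v (i + 1))) :
    ∀ i j, 1 ≤ i → i < j → j ≤ n → G.Adj (v i) (v j) →
      (j < n → G.Adj (v (i + 1)) (v n) → ¬ G.Adj (v (j + 1)) (v 1)) ∧
      (2 ≤ i → G.Adj (v (i - 1)) (v n) → ¬ G.Adj (v (j - 1)) (v 1)) := by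
  intro i j h1i hij hjn hadj
  constructor
  · -- Case A
    intro hjn' hiy hjx
    set LA : List ℕ := List.range' 2 (i-1) ++
      ((List.range' (i+1) (j-i)).reverse ++ (List.range' (j+1) (n-j)).reverse) with hLA
    have e0 : List.range' 1 i = 1 :: List.range' 2 (i-1) := by
      obtain ⟨m, hm⟩ : ∃ m, i = m + 1 := ⟨i-1, by omega⟩
      rw [hm, List.range'_succ]
      simp
    have h1 : List.range' (i+1) (j-i) ++ List.range' (j+1) (n-j)
        = List.range' (i+1) (n-i) := by
      rw [show j+1 = (i+1)+(j-i) by omega, range'_join, show (j-i)+(n-j) = n-i by omega]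
    have hsplit : List.range' 1 n
        = List.range' 1 i ++ (List.range' (i+1) (j-i) ++ List.range' (j+1) (n-j)) := by
      rw [h1, show i+1 = 1+i by omega, range'_join, show i + (n-i) = n by omega]
    have hform : (1 :: LA) = List.range' 1 i ++
        ((List.range' (i+1) (j-i)).reverse ++ (List.range' (j+1) (n-j)).reverse) := by
      rw [e0]; rfl
    have hperm : (1 :: LA).Perm (List.range' 1 n) := by
      rw [hform, hsplit]
      exact List.Perm.append_left _
        (List.Perm.append (List.reverse_perm _) (List.reverse_perm _))
    have hmemiff : ∀ m, m ∈ 1 :: LA ↔ (1 ≤ m ∧ m ≤ n) := by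
      intro m; rw [hperm.mem_iff, List.mem_range'_1]; omega
    apply hham
    apply helper G v 1 LA
    · simp [hLA]; omega
    · -- chain
      have hform2 : 1 :: (LA ++ [1]) = List.range' 1 i ++
          ((List.range' (i+1) (j-i)).reverse ++
            ((List.range' (j+1) (n-j)).reverse ++ [1])) := by
        rw [e0, hLA]; simp
      rw [hform2]
      apply List.IsChain.append
      · exact chainAsc i 1 (fun k hk hk2 => hpath k hk (by omega))
      · apply List.IsChain.append
        · exact chainDesc (j-i) (i+1) (fun k hk hk2 => (hpath k (by omega) (by omega)).symm)
        · apply List.IsChain.append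
          · exact chainDesc (n-j) (j+1) (fun k hk hk2 => (hpath k (by omega) (by omega)).symm)
          · exact List.isChain_singleton 1
          · intro p hp q hq
            rw [List.getLast?_reverse, head?_range' _ (by omega)] at hp
            simp only [List.head?_cons, Option.mem_some_iff] at hp hq
            subst hp; subst hq
            exact hjx
        · intro p hp q hq
          rw [List.getLast?_reverse, head?_range' _ (by omega)] at hp
          rw [List.head?_append_of_ne_nil, List.head?_reverse,
            getLast?_range' _ (by omega)] at hq
          · simp only [Option.mem_some_iff] at hp hq
            subst hp; subst hq
            rw [show (j+1) + (n-j) - 1 = n by omega]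
            exact hiy
          · simp; omega
      · intro p hp q hq
        rw [getLast?_range' _ (by omega)] at hp
        rw [List.head?_append_of_ne_nil, List.head?_reverse,
          getLast?_range' _ (by omega)] at hq
        · simp only [Option.mem_some_iff] at hp hq
          subst hp; subst hq
          rw [show 1 + i - 1 = i by omega, show (i+1) + (j-i) - 1 = j by omega]
          exact hadj
        · simp; omega
    · exact hperm.nodup_iff.mpr List.nodup_range'
    · intro x hx y hy hxy
      exact hinj x y ((hmemiff x).mp hx).1 ((hmemiff x).mp hx).2
        ((hmemiff y).mp hy).1 ((hmemiff y).mp hy).2 hxy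
    · intro w
      obtain ⟨m, hm1, hm2, hm3⟩ := hsurj w
      exact ⟨m, (hmemiff m).mpr ⟨hm1, hm2⟩, hm3⟩
  · -- Case B
    intro h2i hiy hjx
    set LB : List ℕ := (List.range' i (j-i)).reverse ++
      (List.range' j (n-j+1) ++ (List.range' 2 (i-2)).reverse) with hLB
    have e0 : List.range' 1 (i-1) = 1 :: List.range' 2 (i-2) := by
      obtain ⟨m, hm⟩ : ∃ m, i - 1 = m + 1 := ⟨i-2, by omega⟩
      rw [hm, List.range'_succ]
      have : m = i - 2 := by omega
      simp [this]
    have eB : (List.range' 1 (i-1)).reverse = (List.range' 2 (i-2)).reverse ++ [1] := by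
      rw [e0, List.reverse_cons]
    have hsp1 : List.range' i (j-i) ++ List.range' j (n-j+1)
        = List.range' i (n-i+1) := by
      have h := range'_join i (j-i) (n-j+1)
      rw [show i + (j-i) = j by omega] at h
      rw [h]; congr 1; omega
    have hsplit : List.range' 1 n
        = List.range' 1 (i-1) ++ (List.range' i (j-i) ++ List.range' j (n-j+1)) := by
      rw [hsp1]
      have h := range'_join 1 (i-1) (n-i+1)
      rw [show 1 + (i-1) = i by omega] at h
      rw [h]; congr 1; omega
    have hperm : (1 :: LB).Perm (List.range' 1 n) := by
      rw [← Multiset.coe_eq_coe, hsplit, e0, hLB]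
      simp only [← Multiset.cons_coe, ← Multiset.coe_add, Multiset.coe_reverse,
        ← Multiset.singleton_add]
      ac_rfl
    have hmemiff : ∀ m, m ∈ 1 :: LB ↔ (1 ≤ m ∧ m ≤ n) := by
      intro m; rw [hperm.mem_iff, List.mem_range'_1]; omega
    apply hham
    apply helper G v 1 LB
    · simp [hLB]; omega
    · -- chain
      have hform2 : 1 :: (LB ++ [1]) = [1] ++ ((List.range' i (j-i)).reverse ++
          (List.range' j (n-j+1) ++ (List.range' 1 (i-1)).reverse)) := by
        rw [eB, hLB]; simp
      rw [hform2]
      apply List.IsChain.append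
      · exact List.isChain_singleton 1
      · apply List.IsChain.append
        · exact chainDesc (j-i) i (fun k hk hk2 => (hpath k (by omega) (by omega)).symm)
        · apply List.IsChain.append
          · exact chainAsc (n-j+1) j (fun k hk hk2 => hpath k (by omega) (by omega))
          · exact chainDesc (i-1) 1 (fun k hk hk2 => (hpath k (by omega) (by omega)).symm)
          · intro p hp q hq
            rw [getLast?_range' _ (by omega)] at hp
            rw [List.head?_reverse, getLast?_range' _ (by omega)] at hq
            simp only [Option.mem_some_iff] at hp hq
            subst hp; subst hq
            rw [show j + (n-j+1) - 1 = n by omega, show 1 + (i-1) - 1 = i-1 by omega]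
            exact hiy.symm
        · intro p hp q hq
          rw [List.getLast?_reverse, head?_range' _ (by omega)] at hp
          rw [List.head?_append_of_ne_nil, head?_range' _ (by omega)] at hq
          · simp only [Option.mem_some_iff] at hp hq
            subst hp; subst hq
            exact hadj
          · simp
      · intro p hp q hq
        rw [List.head?_append_of_ne_nil, List.head?_reverse,
          getLast?_range' _ (by omega)] at hq
        · rw [List.getLast?_singleton] at hp
          simp only [Option.mem_some_iff] at hp hq
          subst hp; subst hq
          rw [show i + (j-i) - 1 = j-1 by omega]
          exact hjx.symm
        · simp; omega
    · exact hperm.nodup_iff.mpr List.nodup_range'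
    · intro x hx y hy hxy
      exact hinj x y ((hmemiff x).mp hx).1 ((hmemiff x).mp hx).2
        ((hmemiff y).mp hy).1 ((hmemiff y).mp hy).2 hxy
    · intro w
      obtain ⟨m, hm1, hm2, hm3⟩ := hsurj w
      exact ⟨m, (hmemiff m).mpr ⟨hm1, hm2⟩, hm3⟩
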